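/- For all positive integers m ≤ n and every real x > 0, ∑_{k=m}^{n} L(n,k) (k!/(k-m)!) x^{k-m} = ∫_0^∞ (∑_{j=0}^∞ t^j/(j!(j+1)!)) t^n · (d^m/dx^m)(e^{-x-t/x}/x^n) dt, i.e., the m-th derivative with respect to x of both sides of the integral representation of ∑_{k=1}^n L(n,k)x^k agree. -/

import Mathlib

open MeasureTheory Real Finset

/-- Lah numbers: `L(n,k) = C(n-1,k-1) * n! / k!` (as a real number). -/
noncomputable def lah (n k : ℕ) : ℝ :=
  ((n - 1).choose (k - 1) : ℝ) * (Nat.factorial n) / (Nat.factorial k)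

namespace LahAux


noncomputable def f0 (t : ℝ) : ℝ :=
  ∑' j : ℕ, t ^ j / ((Nat.factorial j : ℝ) * (Nat.factorial (j + 1)))

noncomputable def g (n : ℕ) (t : ℝ) : ℝ → ℝ :=
  fun y : ℝ => Real.exp (-y - t / y) / y ^ n

lemma summable_aux (t : ℝ) :
    Summable (fun j : ℕ => t ^ j / ((Nat.factorial j : ℝ) * (Nat.factorial (j + 1)))) := by
  refine Summable.of_norm ?_
  refine Summable.of_nonneg_of_le (fun j => norm_nonneg _) (fun j => ?_)
    (Real.summable_pow_div_factorial |t|)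
  have hd : (0:ℝ) ≤ (Nat.factorial j : ℝ) * (Nat.factorial (j+1) : ℝ) := by positivity
  rw [norm_div, norm_pow, Real.norm_eq_abs, Real.norm_of_nonneg hd]
  rw [div_le_div_iff₀ (by positivity) (by positivity)]
  have h1 : (Nat.factorial j : ℝ) ≤ (Nat.factorial j : ℝ) * (Nat.factorial (j+1) : ℝ) :=
    le_mul_of_one_le_right (by positivity)
      (by exact_mod_cast Nat.one_le_iff_ne_zero.mpr (Nat.factorial_ne_zero _))
  exact mul_le_mul_of_nonneg_left h1 (by positivity)

lemma f0_nonneg {t : ℝ} (ht : 0 ≤ t) : 0 ≤ f0 t :=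
  tsum_nonneg fun j => by positivity

lemma f0_le {ε t : ℝ} (hε : 0 < ε) (ht : 0 ≤ t) :
    f0 t ≤ Real.exp ε⁻¹ * Real.exp (ε * t) := by
  have hexp : Real.exp (ε * t) = ∑' j : ℕ, (ε * t) ^ j / (Nat.factorial j : ℝ) := by
    rw [Real.exp_eq_exp_ℝ, NormedSpace.exp_eq_tsum_div]
  have hsum : Summable (fun j : ℕ => (ε * t) ^ j / (Nat.factorial j : ℝ)) :=
    Real.summable_pow_div_factorial _
  rw [hexp, ← tsum_mul_left]
  refine Summable.tsum_le_tsum (fun j => ?_) (summable_aux t) (hsum.mul_left _)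
  have key : ((Nat.factorial (j+1) : ℝ))⁻¹ ≤ Real.exp ε⁻¹ * ε ^ j := by
    have h1 : (ε⁻¹) ^ j / (Nat.factorial j : ℝ) ≤ Real.exp ε⁻¹ :=
      Real.pow_div_factorial_le_exp (x := ε⁻¹) (by positivity) j
    have h2 : ((Nat.factorial (j+1) : ℝ))⁻¹ ≤ ((Nat.factorial j : ℝ))⁻¹ := by
      apply inv_anti₀ (by positivity)
      exact_mod_cast Nat.factorial_le (Nat.le_succ j)
    have h3 : ((Nat.factorial j : ℝ))⁻¹ = (ε⁻¹) ^ j / (Nat.factorial j : ℝ) * ε ^ j := by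
      rw [div_mul_eq_mul_div, ← mul_pow, inv_mul_cancel₀ (ne_of_gt hε), one_pow, one_div]
    calc ((Nat.factorial (j+1) : ℝ))⁻¹ ≤ ((Nat.factorial j : ℝ))⁻¹ := h2
      _ = (ε⁻¹) ^ j / (Nat.factorial j : ℝ) * ε ^ j := h3
      _ ≤ Real.exp ε⁻¹ * ε ^ j := by
          apply mul_le_mul_of_nonneg_right h1 (by positivity)
  calc t ^ j / ((Nat.factorial j : ℝ) * (Nat.factorial (j+1) : ℝ))
      = t ^ j / (Nat.factorial j : ℝ) * ((Nat.factorial (j+1) : ℝ))⁻¹ := by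
        rw [div_mul_eq_div_div, div_eq_mul_inv]
    _ ≤ t ^ j / (Nat.factorial j : ℝ) * (Real.exp ε⁻¹ * ε ^ j) := by
        apply mul_le_mul_of_nonneg_left key (by positivity)
    _ = Real.exp ε⁻¹ * ((ε * t) ^ j / (Nat.factorial j : ℝ)) := by
        rw [mul_pow]; ring

lemma measurable_f0 : Measurable f0 := by
  apply measurable_of_tendsto_metrizable
    (f := fun N : ℕ => fun t : ℝ =>
      ∑ j ∈ Finset.range N, t ^ j / ((Nat.factorial j : ℝ) * (Nat.factorial (j + 1))))
  · intro N
    exact Finset.measurable_sum _ fun j _ =>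
      (measurable_id.pow_const j).div_const _
  · rw [tendsto_pi_nhds]
    intro t
    exact (summable_aux t).hasSum.tendsto_sum_nat

lemma hasDerivAt_g (n : ℕ) (t : ℝ) {y : ℝ} (hy : 0 < y) :
    HasDerivAt (g n t)
      (-(g n t y) - (n : ℝ) * g (n+1) t y + t * g (n+2) t y) y := by
  have hy0 : y ≠ 0 := ne_of_gt hy
  have h1 : HasDerivAt (fun y : ℝ => -y - t / y) (-1 + t / y ^ 2) y := by
    have ha : HasDerivAt (fun y : ℝ => -y) (-1) y := (hasDerivAt_id y).neg
    have hb : HasDerivAt (fun y : ℝ => t / y) (t * -(y ^ 2)⁻¹) y := by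
      simpa only [div_eq_mul_inv] using (hasDerivAt_inv hy0).const_mul t
    have := ha.sub hb
    refine this.congr_deriv (Eq.symm ?_)
    ring
  have hexp := h1.exp
  have hpow : HasDerivAt (fun y : ℝ => y ^ n) ((n : ℝ) * y ^ (n - 1)) y := hasDerivAt_pow n y
  have hdiv := hexp.div hpow (pow_ne_zero n hy0)
  refine hdiv.congr_deriv (Eq.symm ?_)
  have hpw : (n : ℝ) * y ^ (n - 1) = (n : ℝ) * y ^ n / y := by
    cases n with
    | zero => simp
    | succ k => rw [Nat.succ_sub_one, pow_succ]; field_simp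
  rw [hpw]
  simp only [g]
  field_simp
  ring


noncomputable def stepT (n : ℕ) (p : ℝ × ℕ × ℕ) : List (ℝ × ℕ × ℕ) :=
  [(-p.1, p.2.1, p.2.2), (-(p.1 * ((n : ℝ) + p.2.2)), p.2.1, p.2.2 + 1),
   (p.1, p.2.1 + 1, p.2.2 + 2)]

noncomputable def stepL (n : ℕ) (L : List (ℝ × ℕ × ℕ)) : List (ℝ × ℕ × ℕ) :=
  (L.map (stepT n)).flatten

noncomputable def repL (n : ℕ) : ℕ → List (ℝ × ℕ × ℕ)
  | 0 => [(1, 0, 0)]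
  | m + 1 => stepL n (repL n m)

noncomputable def evalL (n : ℕ) (L : List (ℝ × ℕ × ℕ)) (t y : ℝ) : ℝ :=
  (L.map fun p => p.1 * t ^ p.2.1 * g (n + p.2.2) t y).sum

lemma evalL_nil (n : ℕ) (t y : ℝ) : evalL n [] t y = 0 := rfl

lemma evalL_cons (n : ℕ) (p : ℝ × ℕ × ℕ) (L : List (ℝ × ℕ × ℕ)) (t y : ℝ) :
    evalL n (p :: L) t y = p.1 * t ^ p.2.1 * g (n + p.2.2) t y + evalL n L t y := by
  simp [evalL]

lemma evalL_append (n : ℕ) (L₁ L₂ : List (ℝ × ℕ × ℕ)) (t y : ℝ) :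
    evalL n (L₁ ++ L₂) t y = evalL n L₁ t y + evalL n L₂ t y := by
  simp [evalL]

lemma stepL_cons (n : ℕ) (p : ℝ × ℕ × ℕ) (L : List (ℝ × ℕ × ℕ)) :
    stepL n (p :: L) = stepT n p ++ stepL n L := by
  simp [stepL]

lemma hasDerivAt_evalL (n : ℕ) (L : List (ℝ × ℕ × ℕ)) (t : ℝ) {y : ℝ} (hy : 0 < y) :
    HasDerivAt (fun z => evalL n L t z) (evalL n (stepL n L) t y) y := by
  induction L with
  | nil =>
      simpa [evalL, stepL] using hasDerivAt_const y (0 : ℝ)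
  | cons p L ih =>
      have hhead : HasDerivAt (fun z => p.1 * t ^ p.2.1 * g (n + p.2.2) t z)
          (p.1 * t ^ p.2.1 *
            (-(g (n + p.2.2) t y) - ((n + p.2.2 : ℕ) : ℝ) * g (n + p.2.2 + 1) t y
              + t * g (n + p.2.2 + 2) t y)) y :=
        (hasDerivAt_g (n + p.2.2) t hy).const_mul _
      have := hhead.add ih
      have heq : (fun z => evalL n (p :: L) t z)
          = fun z => p.1 * t ^ p.2.1 * g (n + p.2.2) t z + evalL n L t z := by
        funext z; rw [evalL_cons]
      rw [heq]
      refine this.congr_deriv (Eq.symm ?_)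
      rw [stepL_cons, evalL_append]
      congr 1
      simp only [stepT, evalL, List.map_cons, List.map_nil, List.sum_cons, List.sum_nil]
      push_cast
      ring

lemma rep_eq (n : ℕ) (m : ℕ) (t : ℝ) : ∀ {y : ℝ}, 0 < y →
    iteratedDeriv m (g n t) y = evalL n (repL n m) t y := by
  induction m with
  | zero =>
      intro y hy
      simp [iteratedDeriv_zero, repL, evalL]
  | succ m ih =>
      intro y hy
      rw [iteratedDeriv_succ]
      have hd : HasDerivAt (fun z => evalL n (repL n m) t z)
          (evalL n (stepL n (repL n m)) t y) y := hasDerivAt_evalL n _ t hy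
      have hev : iteratedDeriv m (g n t) =ᶠ[nhds y] fun z => evalL n (repL n m) t z := by
        filter_upwards [IsOpen.mem_nhds isOpen_Ioi hy] with z hz
        exact ih hz
      have hd' : HasDerivAt (iteratedDeriv m (g n t))
          (evalL n (stepL n (repL n m)) t y) y := hd.congr_of_eventuallyEq hev
      rw [hd'.deriv]
      rfl

lemma hasDerivAt_iteratedDeriv_g (n m : ℕ) (t : ℝ) {y : ℝ} (hy : 0 < y) :
    HasDerivAt (iteratedDeriv m (g n t)) (iteratedDeriv (m+1) (g n t) y) y := by
  have hd : HasDerivAt (fun z => evalL n (repL n m) t z)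
      (evalL n (stepL n (repL n m)) t y) y := hasDerivAt_evalL n _ t hy
  have hev : iteratedDeriv m (g n t) =ᶠ[nhds y] fun z => evalL n (repL n m) t z := by
    filter_upwards [IsOpen.mem_nhds isOpen_Ioi hy] with z hz
    exact rep_eq n m t hz
  have := hd.congr_of_eventuallyEq hev
  rwa [show evalL n (stepL n (repL n m)) t y = iteratedDeriv (m+1) (g n t) y from
    (rep_eq n (m+1) t hy).symm] at this

lemma repL_mem {n m : ℕ} {p : ℝ × ℕ × ℕ} (hp : p ∈ repL n m) :
    p.2.1 ≤ m ∧ p.2.2 ≤ 2 * m := by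
  induction m generalizing p with
  | zero =>
      simp only [repL, List.mem_singleton] at hp
      subst hp; simp
  | succ m ih =>
      simp only [repL, stepL, List.mem_flatten, List.mem_map] at hp
      obtain ⟨l, ⟨q, hq, rfl⟩, hpl⟩ := hp
      obtain ⟨h1, h2⟩ := ih hq
      simp only [stepT, List.mem_cons, List.mem_singleton, List.not_mem_nil, or_false] at hpl
      rcases hpl with rfl | rfl | rfl <;> simp <;> omega

noncomputable def Csum (L : List (ℝ × ℕ × ℕ)) : ℝ := (L.map fun p => |p.1|).sum

lemma Csum_nonneg (L : List (ℝ × ℕ × ℕ)) : 0 ≤ Csum L := by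
  apply List.sum_nonneg
  intro a ha
  simp only [List.mem_map] at ha
  obtain ⟨p, _, rfl⟩ := ha
  exact abs_nonneg _

lemma g_nonneg (k : ℕ) (t : ℝ) {y : ℝ} (hy : 0 < y) : 0 ≤ g k t y := by
  unfold g; positivity

lemma g_bound {k K : ℕ} (hk : k ≤ K) {x t y : ℝ} (hx : 0 < x) (ht : 0 ≤ t)
    (hy : y ∈ Set.Icc (x/2) (x+1)) :
    g k t y ≤ Real.exp (-(t/(x+1))) * max ((2/x) ^ K) 1 := by
  obtain ⟨hy1, hy2⟩ := hy
  have hy0 : 0 < y := lt_of_lt_of_le (by linarith) hy1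
  have hsplit : g k t y = Real.exp (-y) * Real.exp (-(t/y)) * (y ^ k)⁻¹ := by
    unfold g
    rw [show -y - t / y = -y + -(t/y) by ring, Real.exp_add, div_eq_mul_inv]
  rw [hsplit]
  have h1 : Real.exp (-y) ≤ 1 := by
    rw [show (1:ℝ) = Real.exp 0 by simp]
    exact Real.exp_le_exp.mpr (by linarith)
  have h2 : Real.exp (-(t/y)) ≤ Real.exp (-(t/(x+1))) := by
    apply Real.exp_le_exp.mpr
    apply neg_le_neg
    apply div_le_div_of_nonneg_left ht hy0 hy2
  have h3 : (y ^ k)⁻¹ ≤ max ((2/x) ^ K) 1 := by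
    rcases le_or_gt 1 y with h | h
    · refine le_max_of_le_right (inv_le_one_of_one_le₀ (one_le_pow₀ h))
    · have hyi : 1 ≤ y⁻¹ := one_le_inv_iff₀.mpr ⟨hy0, h.le⟩
      apply le_max_of_le_left
      rw [← inv_pow]
      calc y⁻¹ ^ k ≤ y⁻¹ ^ K := pow_le_pow_right₀ hyi hk
        _ ≤ (2/x) ^ K := by
            apply pow_le_pow_left₀ (by positivity)
            rw [show (2:ℝ)/x = (x/2)⁻¹ by rw [inv_div]]
            exact inv_anti₀ (by positivity) hy1
  calc Real.exp (-y) * Real.exp (-(t/y)) * (y ^ k)⁻¹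
      ≤ 1 * Real.exp (-(t/(x+1))) * max ((2/x) ^ K) 1 := by
        apply mul_le_mul (mul_le_mul h1 h2 (Real.exp_pos _).le zero_le_one) h3
          (by positivity) (by positivity)
    _ = Real.exp (-(t/(x+1))) * max ((2/x) ^ K) 1 := by ring

lemma evalL_bound (n m : ℕ) {x t y : ℝ} (hx : 0 < x) (ht : 0 ≤ t)
    (hy : y ∈ Set.Icc (x/2) (x+1)) (L : List (ℝ × ℕ × ℕ))
    (hL : ∀ p ∈ L, p.2.1 ≤ m ∧ p.2.2 ≤ 2 * m) :
    |evalL n L t y| ≤ Csum L *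
      ((1+t) ^ m * (Real.exp (-(t/(x+1))) * max ((2/x) ^ (n + 2*m)) 1)) := by
  induction L with
  | nil => simp [evalL_nil, Csum]
  | cons p L ih =>
      have hp := hL p List.mem_cons_self
      have hL' := fun q hq => hL q (List.mem_cons_of_mem _ hq)
      rw [evalL_cons]
      have hcs : Csum (p :: L) = |p.1| + Csum L := by simp [Csum]
      rw [hcs, add_mul]
      refine (abs_add_le _ _).trans (add_le_add ?_ (ih hL'))
      rw [abs_mul, abs_mul]
      have hy0 : 0 < y := lt_of_lt_of_le (by linarith) hy.1
      have habs_t : |t ^ p.2.1| = t ^ p.2.1 := abs_of_nonneg (by positivity)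
      have habs_g : |g (n + p.2.2) t y| = g (n + p.2.2) t y :=
        abs_of_nonneg (g_nonneg _ _ hy0)
      rw [habs_t, habs_g]
      have ht' : t ^ p.2.1 ≤ (1+t) ^ m := by
        calc t ^ p.2.1 ≤ (1+t) ^ p.2.1 := pow_le_pow_left₀ ht (by linarith) _
          _ ≤ (1+t) ^ m := pow_le_pow_right₀ (by linarith) hp.1
      have hg' : g (n + p.2.2) t y
          ≤ Real.exp (-(t/(x+1))) * max ((2/x) ^ (n + 2*m)) 1 :=
        g_bound (by omega) hx ht hy
      rw [mul_assoc]
      apply mul_le_mul_of_nonneg_left _ (abs_nonneg p.1)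
      apply mul_le_mul ht' hg' (g_nonneg _ _ hy0) (by positivity)

lemma integrable_pow_exp (i : ℕ) {δ : ℝ} (hδ : 0 < δ) :
    IntegrableOn (fun t : ℝ => t ^ i * Real.exp (-(δ * t))) (Set.Ioi 0) := by
  have h := integrableOn_rpow_mul_exp_neg_mul_rpow
    (s := (i : ℝ)) (p := 1) (lt_of_lt_of_le neg_one_lt_zero (Nat.cast_nonneg i)) one_pos hδ
  apply h.congr_fun _ measurableSet_Ioi
  intro t ht
  rw [Set.mem_Ioi] at ht
  simp only []
  rw [Real.rpow_natCast, Real.rpow_one, neg_mul]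

lemma integrable_one_add_pow_exp (K : ℕ) {δ : ℝ} (hδ : 0 < δ) :
    IntegrableOn (fun t : ℝ => (1+t) ^ K * Real.exp (-(δ * t))) (Set.Ioi 0) := by
  have h : IntegrableOn (fun t : ℝ => ∑ i ∈ Finset.range (K+1),
      (K.choose i : ℝ) * (t ^ i * Real.exp (-(δ * t)))) (Set.Ioi 0) := by
    apply MeasureTheory.integrable_finset_sum
    intro i _
    exact (integrable_pow_exp i hδ).const_mul _
  apply h.congr_fun _ measurableSet_Ioi
  intro t _
  simp only []
  have hb : (1+t) ^ K = ∑ i ∈ Finset.range (K+1), (K.choose i : ℝ) * t ^ i := by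
    rw [add_comm (1:ℝ) t, add_pow]
    apply Finset.sum_congr rfl
    intro i _
    simp [mul_comm]
  rw [hb, Finset.sum_mul]
  apply Finset.sum_congr rfl
  intro i _
  ring

noncomputable def FF (n m : ℕ) (y : ℝ) : ℝ → ℝ :=
  fun t => f0 t * t ^ n * iteratedDeriv m (g n t) y

lemma measurable_evalL (n : ℕ) (L : List (ℝ × ℕ × ℕ)) (y : ℝ) :
    Measurable (fun t => evalL n L t y) := by
  induction L with
  | nil => simpa [evalL] using measurable_const
  | cons p L ih =>
      have : (fun t => evalL n (p :: L) t y)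
          = fun t => p.1 * t ^ p.2.1 * g (n + p.2.2) t y + evalL n L t y := by
        funext t; simp [evalL]
      rw [this]
      apply Measurable.add _ ih
      apply Measurable.mul
      · exact (measurable_const.mul (measurable_id.pow_const _))
      · unfold g
        apply Measurable.div _ measurable_const
        exact Real.measurable_exp.comp (measurable_const.sub (measurable_id.div_const y))

lemma FF_eq (n m : ℕ) {y : ℝ} (hy : 0 < y) :
    FF n m y = fun t => f0 t * t ^ n * evalL n (repL n m) t y := by
  funext t
  rw [FF, rep_eq n m t hy]

lemma measurable_FF (n m : ℕ) {y : ℝ} (hy : 0 < y) : Measurable (FF n m y) := by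
  rw [FF_eq n m hy]
  exact (measurable_f0.mul (measurable_id.pow_const n)).mul (measurable_evalL n _ y)

lemma FF_bound (n m : ℕ) {x : ℝ} (hx : 0 < x) :
    ∃ φ : ℝ → ℝ, IntegrableOn φ (Set.Ioi 0) ∧
      ∀ t ∈ Set.Ioi (0:ℝ), ∀ y ∈ Set.Icc (x/2) (x+1), |FF n m y t| ≤ φ t := by
  set ε : ℝ := (2*(x+1))⁻¹ with hεdef
  have hε : 0 < ε := by positivity
  set M : ℝ := max ((2/x) ^ (n + 2*m)) 1 with hMdef
  have hM : 0 ≤ M := le_max_of_le_right zero_le_one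
  set A : ℝ := Real.exp ε⁻¹ * Csum (repL n m) * M with hAdef
  refine ⟨fun t => A * ((1+t) ^ (n+m) * Real.exp (-(ε * t))), ?_, ?_⟩
  · exact (integrable_one_add_pow_exp (n+m) hε).const_mul A
  · intro t ht y hy
    rw [Set.mem_Ioi] at ht
    have ht' : (0:ℝ) ≤ t := ht.le
    have hy0 : 0 < y := lt_of_lt_of_le (by linarith) hy.1
    have hrep : FF n m y t = f0 t * t ^ n * evalL n (repL n m) t y := by
      rw [FF, rep_eq n m t hy0]
    rw [hrep, abs_mul]
    have h1 : |f0 t * t ^ n| ≤ (Real.exp ε⁻¹ * Real.exp (ε * t)) * (1+t) ^ n := by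
      rw [abs_mul, abs_of_nonneg (f0_nonneg ht'), abs_of_nonneg (by positivity : (0:ℝ) ≤ t ^ n)]
      apply mul_le_mul (f0_le hε ht') _ (by positivity) (by positivity)
      exact pow_le_pow_left₀ ht' (by linarith) n
    have h2 : |evalL n (repL n m) t y| ≤ Csum (repL n m) *
        ((1+t) ^ m * (Real.exp (-(t/(x+1))) * M)) :=
      evalL_bound n m hx ht' hy _ (fun p hp => repL_mem hp)
    calc |f0 t * t ^ n| * |evalL n (repL n m) t y|
        ≤ ((Real.exp ε⁻¹ * Real.exp (ε * t)) * (1+t) ^ n) *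
          (Csum (repL n m) * ((1+t) ^ m * (Real.exp (-(t/(x+1))) * M))) := by
          apply mul_le_mul h1 h2 (abs_nonneg _) (by positivity)
      _ = A * ((1+t) ^ (n+m) * (Real.exp (ε * t) * Real.exp (-(t/(x+1))))) := by
          rw [hAdef, pow_add]; ring
      _ = A * ((1+t) ^ (n+m) * Real.exp (-(ε * t))) := by
          congr 2
          rw [← Real.exp_add]
          congr 1
          rw [hεdef]
          field_simp
          ring

lemma integrableOn_FF (n m : ℕ) {x : ℝ} (hx : 0 < x) :
    IntegrableOn (FF n m x) (Set.Ioi 0) := by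
  obtain ⟨φ, hφi, hφ⟩ := FF_bound n m hx
  refine Integrable.mono' hφi ((measurable_FF n m hx).aestronglyMeasurable) ?_
  filter_upwards [ae_restrict_mem measurableSet_Ioi] with t ht
  rw [Real.norm_eq_abs]
  exact hφ t ht x ⟨by linarith, by linarith⟩

lemma hasDerivAt_integral (n m : ℕ) {x : ℝ} (hx : 0 < x) :
    HasDerivAt (fun y => ∫ t in Set.Ioi (0:ℝ), FF n m y t)
      (∫ t in Set.Ioi (0:ℝ), FF n (m+1) x t) x := by
  obtain ⟨φ, hφi, hφ⟩ := FF_bound n (m+1) hx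
  set ε : ℝ := min (x/2) 1 with hεdef
  have hε0 : 0 < ε := lt_min (by positivity) one_pos
  have hball : ∀ y ∈ Metric.ball x ε, y ∈ Set.Icc (x/2) (x+1) ∧ 0 < y := by
    intro y hy
    rw [Metric.mem_ball, Real.dist_eq, abs_lt] at hy
    have h1 : ε ≤ x/2 := min_le_left _ _
    have h2 : ε ≤ 1 := min_le_right _ _
    refine ⟨⟨by linarith, by linarith⟩, by linarith⟩
  have key := hasDerivAt_integral_of_dominated_loc_of_deriv_le (μ := volume.restrict (Set.Ioi 0))
    (F := fun y t => FF n m y t) (F' := fun y t => FF n (m+1) y t) (x₀ := x)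
    (bound := φ) (s := Metric.ball x ε) (Metric.ball_mem_nhds x hε0) ?_ ?_ ?_ ?_ ?_ ?_
  · exact key.2
  · filter_upwards [IsOpen.mem_nhds isOpen_Ioi hx] with y hy
    exact (measurable_FF n m hy).aestronglyMeasurable
  · exact integrableOn_FF n m hx
  · exact (measurable_FF n (m+1) hx).aestronglyMeasurable
  · filter_upwards [ae_restrict_mem measurableSet_Ioi] with t ht
    intro y hy
    rw [Real.norm_eq_abs]
    exact hφ t ht y (hball y hy).1
  · exact hφi
  · filter_upwards [ae_restrict_mem measurableSet_Ioi] with t ht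
    intro y hy
    have hy0 : 0 < y := (hball y hy).2
    have hd := (hasDerivAt_iteratedDeriv_g n m t hy0).const_mul (f0 t * t ^ n)
    have heq : (fun y => FF n m y t) = fun y => (f0 t * t ^ n) * iteratedDeriv m (g n t) y := by
      funext z; simp only [FF]
    rw [heq]
    exact hd

lemma exp_tsum (x : ℝ) : Real.exp x = ∑' i : ℕ, x ^ i / (Nat.factorial i : ℝ) := by
  rw [Real.exp_eq_exp_ℝ, NormedSpace.exp_eq_tsum_div]

lemma integral_pow_exp_eq (i : ℕ) {r : ℝ} (hr : 0 < r) :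
    ∫ t in Set.Ioi (0:ℝ), t ^ i * Real.exp (-(r * t))
      = (Nat.factorial i : ℝ) / r ^ (i+1) := by
  have h := Real.integral_rpow_mul_exp_neg_mul_Ioi (a := (i:ℝ)+1) (r := r)
    (by positivity) hr
  rw [show ((i:ℝ)+1-1) = (i:ℝ) by ring] at h
  have hcong : ∫ t in Set.Ioi (0:ℝ), t ^ ((i:ℝ)) * Real.exp (-(r * t))
      = ∫ t in Set.Ioi (0:ℝ), t ^ i * Real.exp (-(r * t)) := by
    apply setIntegral_congr_fun measurableSet_Ioi
    intro t ht
    simp only []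
    rw [Real.rpow_natCast]
  rw [hcong] at h
  rw [h]
  rw [show ((i:ℝ)+1) = (((i+1 : ℕ)):ℝ) by push_cast; ring]
  rw [Real.rpow_natCast, show ((i:ℕ)+1 : ℕ) = i + 1 from rfl]
  rw [show Real.Gamma (((i+1:ℕ)):ℝ) = (Nat.factorial i : ℝ) by
    rw [show (((i+1:ℕ)):ℝ) = (i:ℝ)+1 by push_cast; ring]
    exact Real.Gamma_nat_eq_factorial i]
  rw [div_pow, one_pow]
  ring

lemma summable_b (n : ℕ) {x : ℝ} (hx : 0 ≤ x) :
    Summable (fun j : ℕ => ((Nat.factorial (j+n) : ℝ) /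
      ((Nat.factorial j : ℝ) * (Nat.factorial (j+1)))) * x ^ (j+1)) := by
  apply Summable.of_nonneg_of_le (fun j => by positivity) (fun j => ?_)
    ((Real.summable_pow_div_factorial (2*x)).mul_left
      ((2:ℝ)^n * (Nat.factorial n : ℝ) * x))
  have h1 : (j+n).choose n * Nat.factorial n * Nat.factorial j = Nat.factorial (j+n) := by
    have := Nat.choose_mul_factorial_mul_factorial (Nat.le_add_left n j)
    simpa using this
  have h2 : (j+n).choose n ≤ 2^(j+n) := by
    calc (j+n).choose n ≤ ∑ i ∈ range (j+n+1), (j+n).choose i :=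
          Finset.single_le_sum (fun i _ => Nat.zero_le _)
            (Finset.mem_range.mpr (by omega))
      _ = 2^(j+n) := Nat.sum_range_choose _
  have e1 : ((Nat.factorial (j+n) : ℝ)) / ((Nat.factorial j : ℝ) * (Nat.factorial (j+1))) * x ^ (j+1)
      = ((j+n).choose n : ℝ) * (Nat.factorial n : ℝ) / ((Nat.factorial (j+1) : ℝ)) * x ^ (j+1) := by
    rw [show ((Nat.factorial (j+n) : ℝ))
        = ((j+n).choose n : ℝ) * (Nat.factorial n : ℝ) * (Nat.factorial j : ℝ) by
      exact_mod_cast h1.symm]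
    have hj : (Nat.factorial j : ℝ) ≠ 0 := by positivity
    field_simp
  rw [e1]
  calc ((j+n).choose n : ℝ) * (Nat.factorial n : ℝ) / ((Nat.factorial (j+1) : ℝ)) * x ^ (j+1)
      ≤ ((2:ℝ)^(j+n)) * (Nat.factorial n : ℝ) / ((Nat.factorial j : ℝ)) * x ^ (j+1) := by
        apply mul_le_mul_of_nonneg_right _ (by positivity)
        apply div_le_div₀ (by positivity)
          (mul_le_mul_of_nonneg_right (by exact_mod_cast h2) (by positivity))
          (by positivity)
          (by exact_mod_cast Nat.factorial_le (Nat.le_succ j))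
    _ = (2:ℝ)^n * (Nat.factorial n : ℝ) * x * ((2*x) ^ j / (Nat.factorial j : ℝ)) := by
        rw [mul_pow, pow_add]; ring

lemma coeff_id (n : ℕ) (hn : 1 ≤ n) (j : ℕ) :
    ((Nat.factorial (j+n) : ℝ)) / ((Nat.factorial j : ℝ) * (Nat.factorial (j+1)))
      = ∑ k ∈ Icc 1 n,
          (if k ≤ j + 1 then lah n k / ((Nat.factorial (j+1-k) : ℝ)) else 0) := by
  have hnat : (j + n).choose n
      = ∑ k ∈ range (n+1), (j+1).choose k * (n-1).choose (n-k) := by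
    have h := Nat.add_choose_eq (j+1) (n-1) n
    rw [show j + 1 + (n-1) = j + n by omega] at h
    rw [h]
    exact Finset.Nat.sum_antidiagonal_eq_sum_range_succ
      (fun a b => (j+1).choose a * (n-1).choose b) n
  have hstep : ∀ k ∈ Icc 1 n,
      (if k ≤ j + 1 then lah n k / ((Nat.factorial (j+1-k) : ℝ)) else 0)
        = (Nat.factorial n : ℝ) / (Nat.factorial (j+1) : ℝ) *
            (((j+1).choose k : ℝ) * (((n-1).choose (n-k) : ℕ) : ℝ)) := by
    intro k hk
    rw [Finset.mem_Icc] at hk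
    have hsymm : (n-1).choose (n-k) = (n-1).choose (k-1) := by
      rw [show n - k = (n-1) - (k-1) by omega]
      exact Nat.choose_symm (by omega)
    by_cases hkj : k ≤ j + 1
    · rw [if_pos hkj, Nat.cast_choose ℝ hkj, hsymm]
      unfold lah
      have h1 : (Nat.factorial k : ℝ) ≠ 0 := by positivity
      have h2 : (Nat.factorial (j+1-k) : ℝ) ≠ 0 := by positivity
      have h3 : (Nat.factorial (j+1) : ℝ) ≠ 0 := by positivity
      field_simp
    · rw [if_neg hkj, Nat.choose_eq_zero_of_lt (by omega : j + 1 < k)]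
      simp
  rw [Finset.sum_congr rfl hstep, ← Finset.mul_sum]
  have hext : (∑ k ∈ Icc 1 n, (((j+1).choose k : ℝ) * (((n-1).choose (n-k) : ℕ) : ℝ)))
      = ∑ k ∈ range (n+1), (((j+1).choose k : ℝ) * (((n-1).choose (n-k) : ℕ) : ℝ)) := by
    rw [show range (n+1) = insert 0 (Icc 1 n) by ext a; simp; omega]
    rw [Finset.sum_insert (by simp)]
    rw [show n - 0 = n from rfl, Nat.choose_eq_zero_of_lt (by omega : n - 1 < n)]
    simp
  rw [hext]
  have hcast : (∑ k ∈ range (n+1), (((j+1).choose k : ℝ) * (((n-1).choose (n-k) : ℕ) : ℝ)))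
      = (((j+n).choose n : ℕ) : ℝ) := by
    rw [hnat]
    push_cast
    rfl
  rw [hcast, Nat.cast_choose ℝ (Nat.le_add_left n j), Nat.add_sub_cancel]
  have h3 : (Nat.factorial (j+1) : ℝ) ≠ 0 := by positivity
  have h4 : (Nat.factorial j : ℝ) ≠ 0 := by positivity
  have h5 : (Nat.factorial n : ℝ) ≠ 0 := by positivity
  field_simp

lemma summable_w (n : ℕ) {x : ℝ} (hx : 0 < x) {k : ℕ} (hk1 : 1 ≤ k) :
    Summable (fun j : ℕ =>
      (if k ≤ j + 1 then lah n k / ((Nat.factorial (j+1-k) : ℝ)) else 0) * x ^ (j+1)) := by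
  set w : ℕ → ℝ := fun j =>
    (if k ≤ j + 1 then lah n k / ((Nat.factorial (j+1-k) : ℝ)) else 0) * x ^ (j+1) with hw
  have hg : Function.Injective (fun i : ℕ => i + (k-1)) := add_left_injective _
  have hsupp : ∀ j, j ∉ Set.range (fun i : ℕ => i + (k-1)) → w j = 0 := by
    intro j hj
    have hc : ¬ (k ≤ j + 1) := by
      intro hc
      exact hj ⟨j - (k-1), by show j - (k-1) + (k-1) = j; omega⟩
    simp [hw, hc]
  have hcomp : (w ∘ fun i : ℕ => i + (k-1))
      = fun i => (lah n k * x ^ k) * (x ^ i / (Nat.factorial i : ℝ)) := by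
    funext i
    have h1 : k ≤ i + (k-1) + 1 := by omega
    have h2 : i + (k-1) + 1 - k = i := by omega
    simp only [Function.comp, hw, if_pos h1, h2]
    rw [show i + (k-1) + 1 = i + k by omega, pow_add]
    ring
  rw [← Function.Injective.summable_iff hg hsupp, hcomp]
  exact (Real.summable_pow_div_factorial x).mul_left _

lemma claimA (n : ℕ) {x : ℝ} (hx : 0 < x) {k : ℕ} (hk1 : 1 ≤ k) :
    ∑' j : ℕ, (if k ≤ j + 1 then lah n k / ((Nat.factorial (j+1-k) : ℝ)) else 0) * x ^ (j+1)
      = lah n k * x ^ k * Real.exp x := by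
  set w : ℕ → ℝ := fun j =>
    (if k ≤ j + 1 then lah n k / ((Nat.factorial (j+1-k) : ℝ)) else 0) * x ^ (j+1) with hw
  have hg : Function.Injective (fun i : ℕ => i + (k-1)) := add_left_injective _
  have hsupp : ∀ j, j ∉ Set.range (fun i : ℕ => i + (k-1)) → w j = 0 := by
    intro j hj
    have hc : ¬ (k ≤ j + 1) := by
      intro hc
      exact hj ⟨j - (k-1), by show j - (k-1) + (k-1) = j; omega⟩
    simp [hw, hc]
  have hre := Function.Injective.tsum_eq hg (f := w)
    (fun j hj => by by_contra hc; exact hj (hsupp j hc))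
  rw [show (∑' j, w j) = ∑' i, w (i + (k-1)) from hre.symm]
  have hcomp : ∀ i : ℕ, w (i + (k-1))
      = (lah n k * x ^ k) * (x ^ i / (Nat.factorial i : ℝ)) := by
    intro i
    have h1 : k ≤ i + (k-1) + 1 := by omega
    have h2 : i + (k-1) + 1 - k = i := by omega
    simp only [hw, if_pos h1, h2]
    rw [show i + (k-1) + 1 = i + k by omega, pow_add]
    ring
  rw [tsum_congr hcomp, tsum_mul_left, ← exp_tsum]

lemma base (n : ℕ) (hn : 1 ≤ n) {x : ℝ} (hx : 0 < x) :
    ∫ t in Set.Ioi (0:ℝ), FF n 0 x t = ∑ k ∈ Icc 1 n, lah n k * x ^ k := by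
  have hx0 : x ≠ 0 := ne_of_gt hx
  set u : ℕ → ℝ → ℝ := fun j t =>
    (Real.exp (-x) / ((Nat.factorial j : ℝ) * (Nat.factorial (j+1)) * x ^ n)) *
      (t ^ (j+n) * Real.exp (-(x⁻¹ * t))) with hu
  set I : ℕ → ℝ := fun j =>
    Real.exp (-x) * (((Nat.factorial (j+n) : ℝ) /
      ((Nat.factorial j : ℝ) * (Nat.factorial (j+1)))) * x ^ (j+1)) with hI
  have hFFeq : ∀ t ∈ Set.Ioi (0:ℝ), FF n 0 x t = ∑' j, u j t := by
    intro t ht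
    have : FF n 0 x t = f0 t * (t ^ n * g n t x) := by
      rw [FF, iteratedDeriv_zero]; ring
    rw [this, f0, ← tsum_mul_right]
    apply tsum_congr
    intro j
    simp only [hu, g]
    rw [show -x - t / x = -x + -(x⁻¹ * t) by ring]
    rw [Real.exp_add, pow_add]
    have h1 : (Nat.factorial j : ℝ) ≠ 0 := by positivity
    have h2 : (Nat.factorial (j+1) : ℝ) ≠ 0 := by positivity
    have h3 : (x:ℝ) ^ n ≠ 0 := pow_ne_zero _ hx0
    field_simp
  have huint : ∀ j, IntegrableOn (u j) (Set.Ioi 0) := by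
    intro j
    exact (integrable_pow_exp (j+n) (by positivity : (0:ℝ) < x⁻¹)).const_mul _
  have humeas : ∀ j, AEStronglyMeasurable (u j) (volume.restrict (Set.Ioi 0)) :=
    fun j => (huint j).aestronglyMeasurable
  have hnn : ∀ j, 0 ≤ᵐ[volume.restrict (Set.Ioi 0)] u j := by
    intro j
    filter_upwards [ae_restrict_mem measurableSet_Ioi] with t ht
    rw [Set.mem_Ioi] at ht
    simp only [hu]
    positivity
  have hIval : ∀ j, ∫ t in Set.Ioi (0:ℝ), u j t = I j := by
    intro j
    simp only [hu]
    rw [MeasureTheory.integral_const_mul, integral_pow_exp_eq (j+n) (by positivity : (0:ℝ) < x⁻¹)]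
    simp only [hI]
    rw [inv_pow]
    have h1 : (Nat.factorial j : ℝ) ≠ 0 := by positivity
    have h2 : (Nat.factorial (j+1) : ℝ) ≠ 0 := by positivity
    field_simp
    ring
  have hInn : ∀ j, 0 ≤ I j := by
    intro j
    simp only [hI]
    positivity
  have hIsum : Summable I := by
    simp only [hI]
    exact (summable_b n hx.le).mul_left _
  have hswap : ∫ t in Set.Ioi (0:ℝ), (∑' j, u j t) = ∑' j, ∫ t in Set.Ioi (0:ℝ), u j t := by
    apply MeasureTheory.integral_tsum humeas
    have hlint : ∀ j, ∫⁻ t in Set.Ioi 0, ‖u j t‖ₑ = ENNReal.ofReal (I j) := by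
      intro j
      have h1 : ∫⁻ t in Set.Ioi 0, ‖u j t‖ₑ
          = ∫⁻ t in Set.Ioi 0, ENNReal.ofReal (u j t) := by
        apply lintegral_congr_ae
        filter_upwards [hnn j] with t ht
        exact Real.enorm_eq_ofReal ht
      rw [h1, ← ofReal_integral_eq_lintegral_ofReal (huint j) (hnn j), hIval j]
    rw [tsum_congr hlint]
    rw [show (∑' j, ENNReal.ofReal (I j)) = ENNReal.ofReal (∑' j, I j) from
      (ENNReal.ofReal_tsum_of_nonneg hInn hIsum).symm]
    exact ENNReal.ofReal_ne_top
  calc ∫ t in Set.Ioi (0:ℝ), FF n 0 x t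
      = ∫ t in Set.Ioi (0:ℝ), (∑' j, u j t) := by
        apply setIntegral_congr_fun measurableSet_Ioi
        intro t ht
        exact hFFeq t ht
    _ = ∑' j, ∫ t in Set.Ioi (0:ℝ), u j t := hswap
    _ = ∑' j, I j := tsum_congr hIval
    _ = Real.exp (-x) * ∑' j, (((Nat.factorial (j+n) : ℝ) /
          ((Nat.factorial j : ℝ) * (Nat.factorial (j+1)))) * x ^ (j+1)) := by
        simp only [hI]
        rw [tsum_mul_left]
    _ = Real.exp (-x) * ∑' j, ∑ k ∈ Icc 1 n,
          (if k ≤ j + 1 then lah n k / ((Nat.factorial (j+1-k) : ℝ)) else 0) * x ^ (j+1) := by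
        congr 1
        apply tsum_congr
        intro j
        rw [coeff_id n hn j, Finset.sum_mul]
    _ = Real.exp (-x) * ∑ k ∈ Icc 1 n, ∑' j,
          (if k ≤ j + 1 then lah n k / ((Nat.factorial (j+1-k) : ℝ)) else 0) * x ^ (j+1) := by
        congr 1
        exact Summable.tsum_finsetSum (fun k hk => summable_w n hx (Finset.mem_Icc.mp hk).1)
    _ = Real.exp (-x) * ∑ k ∈ Icc 1 n, lah n k * x ^ k * Real.exp x := by
        congr 1
        exact Finset.sum_congr rfl fun k hk => claimA n hx (Finset.mem_Icc.mp hk).1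
    _ = ∑ k ∈ Icc 1 n, lah n k * x ^ k := by
        rw [← Finset.sum_mul, ← mul_comm (Real.exp x) _, ← mul_assoc]
        rw [mul_comm (Real.exp (-x)) (Real.exp x), ← Real.exp_add]
        simp

noncomputable def Q (n m : ℕ) (x : ℝ) : ℝ :=
  ∑ k ∈ Icc (max 1 m) n,
    lah n k * ((Nat.factorial k : ℝ) / (Nat.factorial (k - m))) * x ^ (k - m)

lemma hasDerivAt_Q (n m : ℕ) (x : ℝ) : HasDerivAt (Q n m) (Q n (m+1) x) x := by
  have h : HasDerivAt (Q n m)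
      (∑ k ∈ Icc (max 1 m) n,
        lah n k * ((Nat.factorial k : ℝ) / (Nat.factorial (k - m))) *
          (((k - m : ℕ) : ℝ) * x ^ (k - m - 1))) x := by
    apply HasDerivAt.fun_sum
    intro k _
    exact (hasDerivAt_pow (k - m) x).const_mul _
  convert h using 1
  rw [Q, show max 1 (m+1) = m + 1 by omega]
  rw [← Finset.sum_subset (by
    intro k hk
    rw [Finset.mem_Icc] at *
    constructor <;> omega : Icc (m+1) n ⊆ Icc (max 1 m) n) ?zero]
  case zero =>
    intro k hk hk'
    rw [Finset.mem_Icc] at hk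
    rw [Finset.mem_Icc] at hk'
    have hkm : k - m = 0 := by omega
    rw [hkm]
    simp
  apply Finset.sum_congr rfl
  intro k hk
  rw [Finset.mem_Icc] at hk
  have hd : k - m = (k - (m+1)) + 1 := by omega
  have hd2 : k - m - 1 = k - (m+1) := by omega
  rw [hd2, hd, Nat.factorial_succ]
  have h1 : (((k - (m+1) : ℕ)) : ℝ) + 1 ≠ 0 := by positivity
  have h2 : (Nat.factorial (k - (m+1)) : ℝ) ≠ 0 := by positivity
  push_cast
  field_simp

lemma main_claim (n : ℕ) (hn : 1 ≤ n) (m : ℕ) :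
    ∀ {x : ℝ}, 0 < x → (∫ t in Set.Ioi (0:ℝ), FF n m x t) = Q n m x := by
  induction m with
  | zero =>
      intro x hx
      rw [base n hn hx, Q]
      apply Finset.sum_congr (by norm_num)
      intro k hk
      have hfac : (Nat.factorial k : ℝ) / (Nat.factorial (k - 0)) = 1 := by
        rw [Nat.sub_zero]; exact div_self (by positivity)
      rw [hfac, Nat.sub_zero, mul_one]
  | succ m ih =>
      intro x hx
      have hB := hasDerivAt_integral n m hx
      have hQ := hasDerivAt_Q n m x
      have heq : (fun y => ∫ t in Set.Ioi (0:ℝ), FF n m y t) =ᶠ[nhds x] Q n m := by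
        filter_upwards [IsOpen.mem_nhds isOpen_Ioi hx] with y hy
        exact ih hy
      have hB' : HasDerivAt (Q n m) (∫ t in Set.Ioi (0:ℝ), FF n (m+1) x t) x :=
        hB.congr_of_eventuallyEq heq.symm
      exact hB'.unique hQ

end LahAux

open LahAux in
theorem lah_sum_deriv_integral_repr (m n : ℕ) (hm : 1 ≤ m) (hmn : m ≤ n)
    (x : ℝ) (hx : 0 < x) :
    ∑ k ∈ Finset.Icc m n,
        lah n k * ((Nat.factorial k : ℝ) / (Nat.factorial (k - m))) * x ^ (k - m)
      = ∫ t in Set.Ioi (0 : ℝ),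
          (∑' j : ℕ, t ^ j / ((Nat.factorial j : ℝ) * (Nat.factorial (j + 1))))
            * t ^ n *
            iteratedDeriv m (fun y : ℝ => Real.exp (-y - t / y) / y ^ n) x := by
  have h1 : (∫ t in Set.Ioi (0:ℝ),
      (∑' j : ℕ, t ^ j / ((Nat.factorial j : ℝ) * (Nat.factorial (j + 1))))
        * t ^ n * iteratedDeriv m (fun y : ℝ => Real.exp (-y - t / y) / y ^ n) x)
      = ∫ t in Set.Ioi (0:ℝ), FF n m x t := by
    apply setIntegral_congr_fun measurableSet_Ioi
    intro t _
    rfl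
  rw [h1, main_claim n (hm.trans hmn) m hx, Q, max_eq_right hm]
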